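/- Let σ, γ, c_τ > 0, β ≥ 0, α_j > 0 for j = 1,…,N, and λ > 0. Define K(f_1,…,f_N,g) = Σ_j ∫(f_j'^2 + σ f_j^2) dx + ∫(γ g'^2 + c_τ g^2) dx and F(f_1,…,f_N,g) = (β/3) g^3 + (Σ_j α_j f_j^2) g. Then the infimum I_λ of K over the set A_λ = {(f_1,…,f_N,g) ∈ (H^1)^{N+1} : ∫ F dx = λ} is strictly positive. -/

import Mathlib

open MeasureTheory

/-- Membership in the Sobolev space `H¹(ℝ)` (for differentiable representatives). -/
def H1 (f : ℝ → ℝ) : Prop :=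
  Differentiable ℝ f ∧ MemLp f 2 (volume : Measure ℝ) ∧
    MemLp (deriv f) 2 (volume : Measure ℝ)

lemma sup_sq_le {g : ℝ → ℝ} (hg : H1 g) (x : ℝ) :
    g x ^ 2 ≤ (∫ t : ℝ, deriv g t ^ 2) + ∫ t : ℝ, g t ^ 2 := by
  obtain ⟨hd, h2, h2'⟩ := hg
  have Isq : Integrable (fun t => g t ^ 2) := h2.integrable_sq
  have Isq' : Integrable (fun t => deriv g t ^ 2) := h2'.integrable_sq
  have Isum : Integrable (fun t => deriv g t ^ 2 + g t ^ 2) := Isq'.add Isq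
  have hmeas : AEStronglyMeasurable (fun t => 2 * (g t * deriv g t)) volume :=
    ((hd.continuous.aestronglyMeasurable.mul h2'.1).const_mul 2)
  have hgg' : Integrable (fun t => 2 * (g t * deriv g t)) := by
    refine Isum.mono' hmeas (Filter.Eventually.of_forall fun t => ?_)
    rw [Real.norm_eq_abs, abs_le]
    constructor <;> nlinarith [sq_nonneg (g t - deriv g t), sq_nonneg (g t + deriv g t)]
  have key : ∀ ε > (0:ℝ), g x ^ 2 ≤ ((∫ t : ℝ, deriv g t ^ 2) + ∫ t : ℝ, g t ^ 2) + ε := by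
    intro ε hε
    have hy : ∃ y, y < x ∧ g y ^ 2 < ε := by
      by_contra h
      push_neg at h
      have hconst : IntegrableOn (fun _ : ℝ => ε) (Set.Iio x) volume := by
        refine Integrable.mono' Isq.integrableOn aestronglyMeasurable_const ?_
        filter_upwards [ae_restrict_mem measurableSet_Iio] with t ht
        rw [Real.norm_eq_abs, abs_of_pos hε]
        exact h t ht
      rw [integrableOn_const_iff] at hconst
      rcases hconst with h' | h'
      · simp at h'; linarith
      · simp [Real.volume_Iio] at h'
    obtain ⟨y, hyx, hyε⟩ := hy
    have hder : ∀ t ∈ Set.uIcc y x, HasDerivAt (fun t => g t ^ 2) (2 * (g t * deriv g t)) t := by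
      intro t _
      have := (hd t).hasDerivAt.fun_pow 2
      exact this.congr_deriv (by norm_num; ring)
    have hint : IntervalIntegrable (fun t => 2 * (g t * deriv g t)) volume y x :=
      hgg'.intervalIntegrable
    have ftc := intervalIntegral.integral_eq_sub_of_hasDerivAt hder hint
    have hbound : (∫ t in y..x, 2 * (g t * deriv g t)) ≤ (∫ t : ℝ, deriv g t ^ 2) + ∫ t : ℝ, g t ^ 2 := by
      rw [intervalIntegral.integral_of_le (le_of_lt hyx)]
      have h1 : (∫ t in Set.Ioc y x, 2 * (g t * deriv g t)) ≤
          ∫ t in Set.Ioc y x, (deriv g t ^ 2 + g t ^ 2) := by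
        refine setIntegral_mono_on hgg'.integrableOn Isum.integrableOn measurableSet_Ioc ?_
        intro t _
        nlinarith [sq_nonneg (g t - deriv g t)]
      have h2a : (∫ t in Set.Ioc y x, (deriv g t ^ 2 + g t ^ 2)) ≤
          ∫ t : ℝ, (deriv g t ^ 2 + g t ^ 2) := by
        refine setIntegral_le_integral Isum (Filter.Eventually.of_forall fun t => ?_)
        positivity
      rw [integral_add Isq' Isq] at h2a
      linarith
    linarith [ftc ▸ hbound]
  exact le_of_forall_pos_le_add (fun ε hε => key ε hε)

lemma gauss_deriv (a : ℝ) :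
    deriv (fun x : ℝ => a * Real.exp (-x ^ 2)) = fun x => a * (-(2 * x)) * Real.exp (-x ^ 2) := by
  funext x
  have h : HasDerivAt (fun x : ℝ => a * Real.exp (-x ^ 2))
      (a * (-(2 * x)) * Real.exp (-x ^ 2)) x := by
    have h1 : HasDerivAt (fun x : ℝ => -x ^ 2) (-(2 * x)) x := by
      simpa using ((hasDerivAt_pow 2 x).fun_neg)
    have h3 := h1.exp.const_mul a
    exact h3.congr_deriv (by ring)
  exact h.deriv

lemma gauss_H1 (a : ℝ) : H1 (fun x : ℝ => a * Real.exp (-x ^ 2)) := by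
  have hc : Continuous (fun x : ℝ => a * Real.exp (-x ^ 2)) := by continuity
  have hc2 : Continuous (fun x : ℝ => a * (-(2 * x)) * Real.exp (-x ^ 2)) := by continuity
  refine ⟨?_, ?_, ?_⟩
  · intro x
    exact ((((differentiable_id.pow 2).neg x).exp).const_mul a)
  · rw [memLp_two_iff_integrable_sq hc.aestronglyMeasurable]
    have h0 : Integrable (fun x : ℝ => a ^ 2 * Real.exp (-2 * x ^ 2)) :=
      (integrable_exp_neg_mul_sq (by norm_num : (0:ℝ) < 2)).const_mul _
    refine h0.congr (Filter.Eventually.of_forall fun x => ?_)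
    simp only [mul_pow, sq]
    rw [show (-2 * (x * x) : ℝ) = (-(x * x)) + (-(x * x)) by ring, Real.exp_add]; ring
  · rw [gauss_deriv, memLp_two_iff_integrable_sq hc2.aestronglyMeasurable]
    have hint : Integrable (fun x : ℝ => 4 * a ^ 2 * Real.exp (-1 * x ^ 2)) :=
      (integrable_exp_neg_mul_sq (by norm_num : (0:ℝ) < 1)).const_mul _
    refine Integrable.mono' hint ((hc2.pow 2).aestronglyMeasurable) (Filter.Eventually.of_forall fun x => ?_)
    have h1 : x ^ 2 ≤ Real.exp (x ^ 2) := by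
      linarith [Real.add_one_le_exp (x ^ 2), sq_nonneg x]
    rw [Real.norm_eq_abs, abs_of_nonneg (by positivity)]
    have key : x ^ 2 * Real.exp (-2 * x ^ 2) ≤ Real.exp (-1 * x ^ 2) := by
      have h4 := mul_le_mul_of_nonneg_right h1 (le_of_lt (Real.exp_pos (-2 * x ^ 2)))
      calc x ^ 2 * Real.exp (-2 * x ^ 2) ≤ Real.exp (x ^ 2) * Real.exp (-2 * x ^ 2) := h4
        _ = Real.exp (-1 * x ^ 2) := by rw [← Real.exp_add]; ring_nf
    have hsq : (a * -(2 * x) * Real.exp (-x ^ 2)) ^ 2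
        = 4 * a ^ 2 * (x ^ 2 * Real.exp (-2 * x ^ 2)) := by
      have h2 : Real.exp (-x^2) * Real.exp (-x^2) = Real.exp (-2 * x^2) := by
        rw [← Real.exp_add]; ring_nf
      rw [← h2]; ring
    rw [hsq]
    nlinarith [mul_le_mul_of_nonneg_left key (by positivity : (0:ℝ) ≤ 4 * a ^ 2)]

lemma gauss_integral_F (N : ℕ) (β : ℝ) (α : Fin N → ℝ) (a : ℝ) :
    (∫ x : ℝ, (β / 3 * (a * Real.exp (-x ^ 2)) ^ 3
      + (∑ j, α j * (a * Real.exp (-x ^ 2)) ^ 2) * (a * Real.exp (-x ^ 2))))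
    = (β / 3 + ∑ j, α j) * a ^ 3 * Real.sqrt (Real.pi / 3) := by
  have hpt : ∀ x : ℝ, (β / 3 * (a * Real.exp (-x ^ 2)) ^ 3
      + (∑ j, α j * (a * Real.exp (-x ^ 2)) ^ 2) * (a * Real.exp (-x ^ 2)))
      = ((β / 3 + ∑ j, α j) * a ^ 3) * Real.exp (-3 * x ^ 2) := by
    intro x
    have he : Real.exp (-x ^ 2) * Real.exp (-x ^ 2) * Real.exp (-x ^ 2)
        = Real.exp (-3 * x ^ 2) := by
      rw [← Real.exp_add, ← Real.exp_add]; ring_nf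
    rw [← he, ← Finset.sum_mul]
    ring
  simp_rw [hpt]
  rw [integral_const_mul, integral_gaussian]

set_option maxHeartbeats 1600000 in
theorem stmt_3 (N : ℕ) (hN : 1 ≤ N) (σ γ cτ β lam : ℝ) (α : Fin N → ℝ)
    (hσ : 0 < σ) (hγ : 0 < γ) (hc : 0 < cτ) (hβ : 0 ≤ β) (hα : ∀ j, 0 < α j)
    (hlam : 0 < lam) :
    0 < sInf { k : ℝ |
      ∃ f : Fin N → ℝ → ℝ, ∃ g : ℝ → ℝ,
        (∀ j, H1 (f j)) ∧ H1 g ∧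
        (∫ x : ℝ, (β / 3 * g x ^ 3 + (∑ j, α j * f j x ^ 2) * g x)) = lam ∧
        k = (∑ j, ∫ x : ℝ, (deriv (f j) x ^ 2 + σ * f j x ^ 2))
            + ∫ x : ℝ, (γ * deriv g x ^ 2 + cτ * g x ^ 2) } := by
  classical
  have hNe : Nonempty (Fin N) := ⟨⟨0, hN⟩⟩
  have hsumα : 0 < ∑ j, α j := Finset.sum_pos (fun j _ => hα j) Finset.univ_nonempty
  obtain ⟨A, hAdef⟩ : ∃ A : ℝ, A = β / (3 * cτ) + (∑ j, α j) / σ := ⟨_, rfl⟩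
  have hA : 0 < A := by
    rw [hAdef]
    have h1 : 0 ≤ β / (3 * cτ) := by positivity
    have h2 : 0 < (∑ j, α j) / σ := by positivity
    linarith
  obtain ⟨B, hBdef⟩ : ∃ B : ℝ, B = 1 / γ + 1 / cτ := ⟨_, rfl⟩
  have hB : 0 < B := by rw [hBdef]; positivity
  have hsB : 0 ≤ Real.sqrt B := Real.sqrt_nonneg _
  obtain ⟨ε, hεdef⟩ : ∃ ε : ℝ, ε = min 1 (lam / (A * (Real.sqrt B + 1))) := ⟨_, rfl⟩
  have hε : 0 < ε := by
    rw [hεdef]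
    refine lt_min one_pos ?_
    have h1 : 0 < A * (Real.sqrt B + 1) := by positivity
    positivity
  -- nonemptiness
  have hne : Set.Nonempty { k : ℝ |
      ∃ f : Fin N → ℝ → ℝ, ∃ g : ℝ → ℝ,
        (∀ j, H1 (f j)) ∧ H1 g ∧
        (∫ x : ℝ, (β / 3 * g x ^ 3 + (∑ j, α j * f j x ^ 2) * g x)) = lam ∧
        k = (∑ j, ∫ x : ℝ, (deriv (f j) x ^ 2 + σ * f j x ^ 2))
            + ∫ x : ℝ, (γ * deriv g x ^ 2 + cτ * g x ^ 2) } := by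
    obtain ⟨C0, hC0⟩ : ∃ C0 : ℝ, C0 = (β / 3 + ∑ j, α j) * Real.sqrt (Real.pi / 3) := ⟨_, rfl⟩
    have hsqrtpos : 0 < Real.sqrt (Real.pi / 3) :=
      Real.sqrt_pos.2 (by positivity)
    have hC0pos : 0 < C0 := by
      rw [hC0]
      have h1 : 0 < β / 3 + ∑ j, α j := by positivity
      positivity
    obtain ⟨a, ha⟩ : ∃ a : ℝ, a = (lam / C0) ^ ((3:ℕ)⁻¹ : ℝ) := ⟨_, rfl⟩
    have ha3 : a ^ (3:ℕ) = lam / C0 := by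
      rw [ha]
      exact Real.rpow_inv_natCast_pow (by positivity) (by norm_num)
    refine ⟨_, fun _ => (fun x => a * Real.exp (-x ^ 2)), (fun x => a * Real.exp (-x ^ 2)),
      fun j => gauss_H1 a, gauss_H1 a, ?_, rfl⟩
    rw [gauss_integral_F, ha3, hC0]
    field_simp
  refine lt_of_lt_of_le hε (le_csInf hne ?_)
  rintro k ⟨f, g, hf, hg, hF, hkeq⟩
  have Ig2 : Integrable (fun x => g x ^ 2) := hg.2.1.integrable_sq
  have Ig'2 : Integrable (fun x => deriv g x ^ 2) := hg.2.2.integrable_sq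
  have If2 : ∀ j, Integrable (fun x => f j x ^ 2) := fun j => (hf j).2.1.integrable_sq
  have If'2 : ∀ j, Integrable (fun x => deriv (f j) x ^ 2) := fun j => (hf j).2.2.integrable_sq
  have hsplit : ∀ j, (∫ x : ℝ, (deriv (f j) x ^ 2 + σ * f j x ^ 2))
      = (∫ x : ℝ, deriv (f j) x ^ 2) + σ * ∫ x : ℝ, f j x ^ 2 := by
    intro j
    rw [integral_add (If'2 j) ((If2 j).const_mul σ), integral_const_mul]
  have hsplitg : (∫ x : ℝ, (γ * deriv g x ^ 2 + cτ * g x ^ 2))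
      = γ * (∫ x : ℝ, deriv g x ^ 2) + cτ * ∫ x : ℝ, g x ^ 2 := by
    rw [integral_add (Ig'2.const_mul γ) (Ig2.const_mul cτ), integral_const_mul, integral_const_mul]
  have nng : 0 ≤ ∫ x : ℝ, g x ^ 2 := integral_nonneg fun x => sq_nonneg _
  have nng' : 0 ≤ ∫ x : ℝ, deriv g x ^ 2 := integral_nonneg fun x => sq_nonneg _
  have nnf : ∀ j, 0 ≤ ∫ x : ℝ, f j x ^ 2 := fun j => integral_nonneg fun x => sq_nonneg _
  have nnf' : ∀ j, 0 ≤ ∫ x : ℝ, deriv (f j) x ^ 2 := fun j => integral_nonneg fun x => sq_nonneg _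
  have hk : k = (∑ j, ((∫ x : ℝ, deriv (f j) x ^ 2) + σ * ∫ x : ℝ, f j x ^ 2))
      + (γ * (∫ x : ℝ, deriv g x ^ 2) + cτ * ∫ x : ℝ, g x ^ 2) := by
    rw [hkeq, hsplitg]
    congr 1
    exact Finset.sum_congr rfl fun j _ => hsplit j
  have hTnn : ∀ j, 0 ≤ (∫ x : ℝ, deriv (f j) x ^ 2) + σ * ∫ x : ℝ, f j x ^ 2 := by
    intro j
    have h1 := nnf j
    have h2 := nnf' j
    positivity
  have hUg' : 0 ≤ γ * ∫ x : ℝ, deriv g x ^ 2 := mul_nonneg hγ.le nng'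
  have hUg : 0 ≤ cτ * ∫ x : ℝ, g x ^ 2 := mul_nonneg hc.le nng
  have hSnn : 0 ≤ ∑ j, ((∫ x : ℝ, deriv (f j) x ^ 2) + σ * ∫ x : ℝ, f j x ^ 2) :=
    Finset.sum_nonneg fun j _ => hTnn j
  have hk0 : 0 ≤ k := by rw [hk]; linarith
  have hfk : ∀ j, σ * (∫ x : ℝ, f j x ^ 2) ≤ k := by
    intro j
    have h1 : ((∫ x : ℝ, deriv (f j) x ^ 2) + σ * ∫ x : ℝ, f j x ^ 2)
        ≤ ∑ j, ((∫ x : ℝ, deriv (f j) x ^ 2) + σ * ∫ x : ℝ, f j x ^ 2) :=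
      Finset.single_le_sum (fun j _ => hTnn j) (Finset.mem_univ j)
    have h2 := nnf' j
    rw [hk]; linarith
  have hgk : cτ * (∫ x : ℝ, g x ^ 2) ≤ k := by rw [hk]; linarith
  have hg'k : γ * (∫ x : ℝ, deriv g x ^ 2) ≤ k := by rw [hk]; linarith
  -- sup bound
  have hsup : ∀ x, g x ^ 2 ≤ B * k := by
    intro x
    have h1 := sup_sq_le hg x
    have h2 : (∫ t : ℝ, deriv g t ^ 2) ≤ k / γ := by
      rw [le_div_iff₀ hγ]; nlinarith
    have h3 : (∫ t : ℝ, g t ^ 2) ≤ k / cτ := by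
      rw [le_div_iff₀ hc]; nlinarith
    have h4 : k / γ + k / cτ = B * k := by rw [hBdef]; ring
    linarith
  obtain ⟨s, hs_def⟩ : ∃ s : ℝ, s = Real.sqrt (B * k) := ⟨_, rfl⟩
  have hs : 0 ≤ s := hs_def ▸ Real.sqrt_nonneg _
  have habs : ∀ x, |g x| ≤ s := by
    intro x
    rw [hs_def, ← Real.sqrt_sq_eq_abs]
    exact Real.sqrt_le_sqrt (hsup x)
  -- F integrable
  have hFint : Integrable (fun x => β / 3 * g x ^ 3 + (∑ j, α j * f j x ^ 2) * g x) := by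
    by_contra h
    rw [integral_undef h] at hF
    linarith
  have hGint : Integrable (fun x => s * (β / 3 * g x ^ 2 + ∑ j, α j * f j x ^ 2)) :=
    (((Ig2.const_mul (β / 3)).add
      (integrable_finset_sum _ fun j _ => (If2 j).const_mul (α j))).const_mul s)
  have hmono : ∀ x, β / 3 * g x ^ 3 + (∑ j, α j * f j x ^ 2) * g x
      ≤ s * (β / 3 * g x ^ 2 + ∑ j, α j * f j x ^ 2) := by
    intro x
    have h1 : g x ^ 3 ≤ g x ^ 2 * |g x| := by
      calc g x ^ 3 ≤ |g x ^ 3| := le_abs_self _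
        _ = g x ^ 2 * |g x| := by rw [abs_pow, pow_succ, sq_abs]
    have h2 : 0 ≤ ∑ j, α j * f j x ^ 2 :=
      Finset.sum_nonneg fun j _ => mul_nonneg (hα j).le (sq_nonneg _)
    have h3 : (∑ j, α j * f j x ^ 2) * g x ≤ (∑ j, α j * f j x ^ 2) * s :=
      mul_le_mul_of_nonneg_left ((le_abs_self _).trans (habs x)) h2
    have h4 := habs x
    have c1 : β / 3 * g x ^ 3 ≤ β / 3 * (g x ^ 2 * s) := by
      have hx : g x ^ 3 ≤ g x ^ 2 * s :=
        h1.trans (mul_le_mul_of_nonneg_left h4 (sq_nonneg _))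
      exact mul_le_mul_of_nonneg_left hx (by positivity)
    have hring : s * (β / 3 * g x ^ 2 + ∑ j, α j * f j x ^ 2)
        = β / 3 * (g x ^ 2 * s) + (∑ j, α j * f j x ^ 2) * s := by ring
    linarith
  have hlamle : lam ≤ s * (β / 3 * (∫ x : ℝ, g x ^ 2) + ∑ j, α j * ∫ x : ℝ, f j x ^ 2) := by
    rw [← hF]
    have h1 := integral_mono hFint hGint hmono
    have h2 : (∫ x : ℝ, s * (β / 3 * g x ^ 2 + ∑ j, α j * f j x ^ 2))
        = s * (β / 3 * (∫ x : ℝ, g x ^ 2) + ∑ j, α j * ∫ x : ℝ, f j x ^ 2) := by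
      rw [integral_const_mul, integral_add (Ig2.const_mul (β / 3))
        (integrable_finset_sum _ fun j _ => (If2 j).const_mul (α j)),
        integral_const_mul, integral_finset_sum _ fun j _ => (If2 j).const_mul (α j)]
      congr 2
      exact Finset.sum_congr rfl fun j _ => integral_const_mul _ _
    rw [h2] at h1
    exact h1
  -- bound inner sum by A * k
  have hinner : β / 3 * (∫ x : ℝ, g x ^ 2) + (∑ j, α j * ∫ x : ℝ, f j x ^ 2) ≤ A * k := by
    have hb1 : β / 3 * (∫ x : ℝ, g x ^ 2) ≤ β / (3 * cτ) * k := by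
      have h3 : (∫ x : ℝ, g x ^ 2) ≤ k / cτ := by rw [le_div_iff₀ hc]; nlinarith
      have h4 := mul_le_mul_of_nonneg_left h3 (by positivity : (0:ℝ) ≤ β / 3)
      have h5 : β / 3 * (k / cτ) = β / (3 * cτ) * k := by ring
      linarith
    have hb2 : (∑ j, α j * ∫ x : ℝ, f j x ^ 2) ≤ (∑ j, α j) / σ * k := by
      have h5 : ∀ j ∈ Finset.univ, α j * (∫ x : ℝ, f j x ^ 2) ≤ α j * (k / σ) := by
        intro j _
        refine mul_le_mul_of_nonneg_left ?_ (hα j).le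
        rw [le_div_iff₀ hσ]
        linarith [hfk j]
      have h6 := Finset.sum_le_sum h5
      have h7 : (∑ j : Fin N, α j * (k / σ)) = (∑ j, α j) / σ * k := by
        rw [← Finset.sum_mul]; ring
      linarith
    rw [hAdef]
    have h8 : (β / (3 * cτ) + (∑ j, α j) / σ) * k = β / (3 * cτ) * k + (∑ j, α j) / σ * k := by
      ring
    linarith
  have hAk : 0 ≤ A * k := mul_nonneg hA.le hk0
  -- final contradiction argument
  by_contra hcon
  push_neg at hcon
  have hk1 : k < 1 := lt_of_lt_of_le hcon (hεdef ▸ min_le_left _ _)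
  have hk2 : k < lam / (A * (Real.sqrt B + 1)) := lt_of_lt_of_le hcon (hεdef ▸ min_le_right _ _)
  have hsB' : s ≤ Real.sqrt B := by
    rw [hs_def]
    have h9 : B * k ≤ B := by nlinarith
    exact Real.sqrt_le_sqrt h9
  have hlam2 : lam ≤ Real.sqrt B * (A * k) := by
    have h6 : s * (β / 3 * (∫ x : ℝ, g x ^ 2) + ∑ j, α j * ∫ x : ℝ, f j x ^ 2)
        ≤ s * (A * k) := mul_le_mul_of_nonneg_left hinner hs
    have h7 : s * (A * k) ≤ Real.sqrt B * (A * k) :=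
      mul_le_mul_of_nonneg_right hsB' hAk
    linarith
  have h8 : k * (A * (Real.sqrt B + 1)) < lam := by
    rw [← lt_div_iff₀ (by positivity)]
    exact hk2
  have hre : k * (A * (Real.sqrt B + 1)) = Real.sqrt B * (A * k) + A * k := by ring
  linarith [mul_nonneg hA.le hk0]
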